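/- Let F be a field, g(X) = g_0 + g_1 X + … + g_{d−1} X^{d−1} + X^d a monic polynomial of degree d ≥ 1 over F, and f(X) = f_0 + f_1 X + … + f_μ X^μ ∈ F[X] with μ ≥ 0. Define the division shift register step: from state s = (s_0,…,s_{d−1}) ∈ F^d with input x ∈ F, output o = s_{d−1} and pass to the new state s' given by s'_0 = x − g_0·o and s'_j = s_{j−1} − g_j·o for 1 ≤ j ≤ d−1. Starting from the zero state and feeding the inputs f_μ, f_{μ−1}, …, f_0 in this order, the following hold: (1) for every 1 ≤ t ≤ μ+1, the state after t steps is the coefficient vector of P_t(X) mod g(X), where P_t(X) = Σ_{i=0}^{t−1} f_{μ−i} X^{t−1−i}; in particular after μ+1 steps the state is the coefficient vector of f(X) mod g(X); (2) the outputs o_1,…,o_{μ+1} satisfy f(X) div g(X) = Σ_{t=1}^{μ+1} o_t X^{μ+1−t}, i.e., the register outputs the coefficients of the quotient f div g, starting with the coefficient of X^{μ−d}. -/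

import Mathlib

open Polynomial

/-- A linear feed-back shift register dividing by a monic polynomial g of
degree d ≥ 1: from state s with input x it outputs o = s_{d-1} and passes to
the state s' with s'₀ = x - g₀·o and s'_j = s_{j-1} - g_j·o.  Starting from
the zero state and feeding the coefficients f_μ, f_{μ-1}, …, f₀ of f:
(1) after t steps (1 ≤ t ≤ μ+1) the state is the coefficient vector of
P_t(X) mod g(X) where P_t(X) = Σ_{i<t} f_{μ-i} X^{t-1-i}; in particular after
μ+1 steps it is the coefficient vector of f mod g; and
(2) the outputs form the quotient: f div g = Σ_{t=1}^{μ+1} o_t X^{μ+1-t}. -/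
theorem stmt_16 {F : Type*} [Field F] (d μ : ℕ) (hd : 1 ≤ d)
    (g : Polynomial F) (hmonic : g.Monic) (hdeg : g.natDegree = d)
    (f : Polynomial F) (hf : f.natDegree ≤ μ)
    (S : ℕ → Fin d → F) (hS0 : S 0 = 0)
    (hstep : ∀ t ≤ μ, ∀ m : Fin d,
      S (t + 1) m = (if (m : ℕ) = 0 then f.coeff (μ - t)
          else S t ⟨(m : ℕ) - 1, by have := m.isLt; omega⟩)
        - g.coeff m * S t ⟨d - 1, by omega⟩) :
    (∀ t, 1 ≤ t → t ≤ μ + 1 → ∀ m : Fin d,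
        S t m = ((∑ i ∈ Finset.range t,
          Polynomial.C (f.coeff (μ - i)) * Polynomial.X ^ (t - 1 - i)) %ₘ g).coeff m) ∧
    (∀ m : Fin d, S (μ + 1) m = (f %ₘ g).coeff m) ∧
    f /ₘ g = ∑ t ∈ Finset.range (μ + 1),
      Polynomial.C (S t ⟨d - 1, by omega⟩) * Polynomial.X ^ (μ - t) := by
  have hdegg : g.degree = (d : ℕ) := by
    rw [degree_eq_natDegree hmonic.ne_zero, hdeg]
  -- coefficient of p * X
  have hrx : ∀ (p : F[X]) (k : ℕ),
      (p * X).coeff k = if k = 0 then 0 else p.coeff (k - 1) := by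
    intro p k
    cases k with
    | zero => simp
    | succ n => simp [Polynomial.coeff_mul_X]
  -- P notation
  set P : ℕ → F[X] := fun t => ∑ i ∈ Finset.range t,
    Polynomial.C (f.coeff (μ - i)) * Polynomial.X ^ (t - 1 - i) with hP
  -- main induction
  have main : ∀ t, t ≤ μ + 1 →
      (∀ m : Fin d, S t m = (P t %ₘ g).coeff m) ∧
      (P t /ₘ g = ∑ s ∈ Finset.range t,
        Polynomial.C (S s ⟨d - 1, by omega⟩) * Polynomial.X ^ (t - 1 - s)) := by
    intro t
    induction t with
    | zero =>
      intro _
      have hP0 : P 0 = 0 := by simp [hP]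
      refine ⟨fun m => ?_, by simp [hP0]⟩
      rw [hS0, hP0, Polynomial.zero_modByMonic]
      simp
    | succ t ih =>
      intro ht
      have ht' : t ≤ μ := by omega
      obtain ⟨ih1, ih2⟩ := ih (by omega)
      set a := f.coeff (μ - t) with ha
      set r := P t %ₘ g with hr
      set c := r.coeff (d - 1) with hc
      have hrdeg : r.degree < (d : ℕ) := by
        rw [← hdegg]; exact Polynomial.degree_modByMonic_lt _ hmonic
      -- recurrence for P
      have hPrec : P (t + 1) = P t * X + Polynomial.C a := by
        rw [hP]
        simp only
        rw [Finset.sum_range_succ, Finset.sum_mul]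
        congr 1
        · apply Finset.sum_congr rfl
          intro i hi
          have hi' : i < t := Finset.mem_range.1 hi
          rw [mul_assoc, ← pow_succ]
          congr 2
          omega
        · have : t + 1 - 1 - t = 0 := by omega
          rw [this, pow_zero, mul_one]
      -- degree bound for the candidate remainder
      have hlt : (r * X + Polynomial.C a - Polynomial.C c * g).degree < g.degree := by
        rw [hdegg, Polynomial.degree_lt_iff_coeff_zero]
        intro m hm
        have hm' : d ≤ m := by exact_mod_cast hm
        have hm0 : m ≠ 0 := by omega
        simp only [Polynomial.coeff_sub, Polynomial.coeff_add, Polynomial.coeff_C_mul,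
          hrx, if_neg hm0, Polynomial.coeff_C, if_neg hm0, add_zero]
        rcases eq_or_lt_of_le hm' with heq | hlt'
        · have h1 : g.coeff m = 1 := by
            have := hmonic.coeff_natDegree
            rw [hdeg, heq] at this
            exact this
          rw [h1, mul_one, show m - 1 = d - 1 by omega, ← hc, sub_self]
        · have h1 : r.coeff (m - 1) = 0 := by
            apply Polynomial.coeff_eq_zero_of_degree_lt
            exact lt_of_lt_of_le hrdeg (by exact_mod_cast Nat.le_sub_one_of_lt hlt')
          have h2 : g.coeff m = 0 := by
            apply Polynomial.coeff_eq_zero_of_natDegree_lt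
            omega
          rw [h1, h2, mul_zero, sub_zero]
      -- identity
      have hid : (r * X + Polynomial.C a - Polynomial.C c * g) +
          g * ((P t /ₘ g) * X + Polynomial.C c) = P (t + 1) := by
        have hmd := Polynomial.modByMonic_add_div (P t) g
        rw [hPrec]
        linear_combination Polynomial.X * hmd
      have huniq := Polynomial.div_modByMonic_unique ((P t /ₘ g) * X + Polynomial.C c)
        (r * X + Polynomial.C a - Polynomial.C c * g) hmonic ⟨hid, hlt⟩
      have hcS : S t ⟨d - 1, by omega⟩ = c := ih1 ⟨d - 1, by omega⟩
      constructor
      · intro m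
        rw [hstep t ht' m, huniq.2]
        have hmlt : (m : ℕ) < d := m.isLt
        simp only [Polynomial.coeff_sub, Polynomial.coeff_add, Polynomial.coeff_C_mul,
          hrx, Polynomial.coeff_C, hcS]
        by_cases h0 : (m : ℕ) = 0
        · simp only [if_pos h0]
          ring
        · simp only [if_neg h0]
          rw [ih1 ⟨(m : ℕ) - 1, by omega⟩]
          ring
      · rw [huniq.1, ih2, Finset.sum_range_succ, Finset.sum_mul]
        congr 1
        · apply Finset.sum_congr rfl
          intro s hs
          have hs' : s < t := Finset.mem_range.1 hs
          rw [mul_assoc, ← pow_succ]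
          congr 2
          omega
        · rw [show t + 1 - 1 - t = 0 by omega, pow_zero, mul_one, hcS]
  -- P (μ+1) = f
  have hPf : P (μ + 1) = f := by
    rw [hP]
    simp only
    have hcongr : ∀ i ∈ Finset.range (μ + 1),
        Polynomial.C (f.coeff (μ - i)) * Polynomial.X ^ (μ + 1 - 1 - i) =
        (fun j => Polynomial.C (f.coeff j) * Polynomial.X ^ j) (μ + 1 - 1 - i) := by
      intro i _; simp
    rw [Finset.sum_congr rfl hcongr,
      Finset.sum_range_reflect (fun j => Polynomial.C (f.coeff j) * Polynomial.X ^ j) (μ + 1)]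
    conv_rhs => rw [f.as_sum_range' (μ + 1) (by omega)]
    exact Finset.sum_congr rfl fun i _ => Polynomial.C_mul_X_pow_eq_monomial
  refine ⟨?_, ?_, ?_⟩
  · intro t h1 ht m
    exact (main t ht).1 m
  · intro m
    rw [(main (μ + 1) le_rfl).1 m, hPf]
  · have := (main (μ + 1) le_rfl).2
    rw [hPf] at this
    rw [this]
    exact Finset.sum_congr rfl fun t ht => by norm_num
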